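/- Let a, h, b, f, g, c be real numbers such that the determinant Δ = abc + 2fgh − ag² − bf² − ch² equals 0 and the sub-determinant ĥ = ab − h² is strictly positive. Then there exists exactly one pair (x, y) ∈ ℝ² satisfying a x² + 2h x y + b y² + 2f x + 2g y + c = 0 (the degenerate conic is a single point). -/

import Mathlib

/-- a degenerate conic (`Δ = 0`) with positive sub-determinant
(`ĥ > 0`) is a single point: exactly one `(x, y)` satisfies the conic equation. -/
theorem degenerate_conic_single_point
    (a h b f g c : ℝ)
    (hΔ : a * b * c + 2 * f * g * h - a * g ^ 2 - b * f ^ 2 - c * h ^ 2 = 0)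
    (hhat : 0 < a * b - h ^ 2) :
    ∃! p : ℝ × ℝ,
      a * p.1 ^ 2 + 2 * h * p.1 * p.2 + b * p.2 ^ 2 + 2 * f * p.1 + 2 * g * p.2 + c = 0 := by
  have hD : a * b - h ^ 2 ≠ 0 := ne_of_gt hhat
  have ha : a ≠ 0 := by
    intro h0
    rw [h0] at hhat
    nlinarith [sq_nonneg h]
  refine ⟨((g * h - b * f) / (a * b - h ^ 2), (f * h - a * g) / (a * b - h ^ 2)), ?_, ?_⟩
  · show a * ((g * h - b * f) / (a * b - h ^ 2)) ^ 2
        + 2 * h * ((g * h - b * f) / (a * b - h ^ 2)) * ((f * h - a * g) / (a * b - h ^ 2))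
        + b * ((f * h - a * g) / (a * b - h ^ 2)) ^ 2
        + 2 * f * ((g * h - b * f) / (a * b - h ^ 2))
        + 2 * g * ((f * h - a * g) / (a * b - h ^ 2)) + c = 0
    field_simp
    linear_combination (a * b - h ^ 2) * hΔ
  · rintro ⟨x, y⟩ hxy
    simp only at hxy
    have key : (a * b - h ^ 2) * (a * x + h * y + f) ^ 2
        + ((a * b - h ^ 2) * y + (a * g - f * h)) ^ 2 = 0 := by
      linear_combination a * (a * b - h ^ 2) * hxy - a * hΔ
    have p1 : 0 ≤ (a * b - h ^ 2) * (a * x + h * y + f) ^ 2 := by positivity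
    have p2 : 0 ≤ ((a * b - h ^ 2) * y + (a * g - f * h)) ^ 2 := sq_nonneg _
    have e1 : (a * b - h ^ 2) * (a * x + h * y + f) ^ 2 = 0 := by linarith
    have e2 : ((a * b - h ^ 2) * y + (a * g - f * h)) ^ 2 = 0 := by linarith
    have h1 : a * x + h * y + f = 0 := by
      rcases mul_eq_zero.mp e1 with h' | h'
      · exact absurd h' hD
      · exact pow_eq_zero_iff (by norm_num) |>.mp h'
    have h2 : (a * b - h ^ 2) * y + (a * g - f * h) = 0 :=
      pow_eq_zero_iff (by norm_num) |>.mp e2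
    have hy : y = (f * h - a * g) / (a * b - h ^ 2) := by
      field_simp
      linarith
    have hx : x = (g * h - b * f) / (a * b - h ^ 2) := by
      rw [eq_div_iff hD]
      apply mul_left_cancel₀ ha
      rw [hy] at h1
      field_simp at h1
      linear_combination h1
    exact Prod.ext hx hy
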